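/- (Completeness of the prefix pattern pruning strategy.) Let t = (t_1, …, t_n) be a time series, let k > 0 be the forgetting factor, and let r be a pattern of length m+1 with prefix sub-pattern e = (r_1, …, r_m). Then every forgetting value satisfies 0 < f_j ≤ 1 for 1 ≤ j ≤ n, and consequently fsup(r, t) ≤ |L_r| ≤ |L_e|. In particular, for any threshold minsup, if |L_e| < minsup then fsup(r, t) < minsup, so r cannot be a frequent order-preserving pattern with forgetting mechanism. -/

import Mathlib

open scoped Classical

/-- The rank of the `i`-th entry of a finite sequence `a`:
`rank_a(a_i) = 1 + |{j : a_j < a_i}|`. -/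
noncomputable def rankOf {m : ℕ} (a : Fin m → ℝ) (i : Fin m) : ℕ :=
  1 + (Finset.univ.filter fun j => a j < a i).card

/-- The relative order `R(a) = (rank_a(a_1), …, rank_a(a_m))`. -/
noncomputable def relOrder {m : ℕ} (a : Fin m → ℝ) : Fin m → ℕ :=
  fun i => rankOf a i

/-- `⟨j⟩` (1-based, `m ≤ j ≤ n`) is an occurrence of the length-`m` pattern `p` in
the time series `t = (t_1, …, t_n)`:  `R(t_{j-m+1}, …, t_j) = R(p)`. -/
def isOcc {n m : ℕ} (t : Fin n → ℝ) (p : Fin m → ℝ) (j : ℕ) : Prop :=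
  ∃ (_hm : m ≤ j) (_hn : j ≤ n),
    relOrder (fun i : Fin m => t ⟨j - m + i.val, by have := i.isLt; omega⟩) = relOrder p

/-- The occurrence set `L_p` of pattern `p` in `t`, as a finset of positions. -/
noncomputable def occSet {n m : ℕ} (t : Fin n → ℝ) (p : Fin m → ℝ) : Finset ℕ :=
  (Finset.Icc 1 n).filter fun j => isOcc t p j

/-- The forgetting value of position `j`: `f_j = e^{-k(n-j)}`. -/
noncomputable def fval (k : ℝ) (n j : ℕ) : ℝ :=
  Real.exp (-(k * ((n : ℝ) - (j : ℝ))))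

/-- The support with forgetting mechanism: `fsup(p, t) = Σ_{j ∈ L_p} f_j`. -/

lemma rankOf_lt_iff {m : ℕ} (a : Fin m → ℝ) (i j : Fin m) :
    rankOf a i < rankOf a j ↔ a i < a j := by
  constructor
  · intro h
    by_contra hij
    push_neg at hij
    have hsub : (Finset.univ.filter fun k => a k < a j) ⊆
        (Finset.univ.filter fun k => a k < a i) := by
      intro k hk
      simp only [Finset.mem_filter, Finset.mem_univ, true_and] at hk ⊢
      exact lt_of_lt_of_le hk hij
    have := Finset.card_le_card hsub
    simp [rankOf] at h
    omega
  · intro h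
    have hss : (Finset.univ.filter fun k => a k < a i) ⊂
        (Finset.univ.filter fun k => a k < a j) := by
      refine ⟨fun k hk => ?_, fun hsub => ?_⟩
      · simp only [Finset.mem_filter, Finset.mem_univ, true_and] at hk ⊢
        exact lt_trans hk h
      · have hi : i ∈ (Finset.univ.filter fun k => a k < a j) := by simp [h]
        have := hsub hi
        simp at this
    have := Finset.card_lt_card hss
    simp only [rankOf]
    omega

lemma relOrder_comp {M m : ℕ} (a b : Fin M → ℝ)
    (hab : ∀ i j, a i < a j ↔ b i < b j) (f : Fin m → Fin M) :
    relOrder (a ∘ f) = relOrder (b ∘ f) := by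
  funext i
  simp only [relOrder, rankOf, Function.comp]
  apply congrArg (1 + ·)
  apply congrArg Finset.card
  apply Finset.filter_congr
  intro x _
  exact hab _ _

lemma relOrder_eq_iff_comp {M m : ℕ} (a b : Fin M → ℝ)
    (h : relOrder a = relOrder b) (f : Fin m → Fin M) :
    relOrder (a ∘ f) = relOrder (b ∘ f) := by
  apply relOrder_comp
  intro i j
  have hi := congrFun h i
  have hj := congrFun h j
  simp only [relOrder] at hi hj
  rw [← rankOf_lt_iff a i j, ← rankOf_lt_iff b i j, hi, hj]

noncomputable def fsup {n m : ℕ} (k : ℝ) (t : Fin n → ℝ) (p : Fin m → ℝ) : ℝ :=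
  ∑ j ∈ occSet t p, fval k n j

/-- Completeness of the prefix pattern pruning strategy: for forgetting factor
`k > 0`, every forgetting value satisfies `0 < f_j ≤ 1` for `1 ≤ j ≤ n`;
consequently `fsup(r, t) ≤ |L_r| ≤ |L_e|` where `e = (r_1, …, r_m)` is the prefix
sub-pattern of `r`, and if `|L_e| < minsup` then `fsup(r, t) < minsup`, so `r` is
not frequent. -/
theorem prefix_pruning_complete {n m : ℕ} (t : Fin n → ℝ) (k : ℝ) (hk : 0 < k)
    (r : Fin (m + 1) → ℝ) :
    (∀ j : ℕ, 1 ≤ j → j ≤ n → 0 < fval k n j ∧ fval k n j ≤ 1) ∧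
    fsup k t r ≤ ((occSet t r).card : ℝ) ∧
    (occSet t r).card ≤ (occSet t (fun i : Fin m => r i.castSucc)).card ∧
    ∀ minsup : ℝ,
      ((occSet t (fun i : Fin m => r i.castSucc)).card : ℝ) < minsup →
        fsup k t r < minsup := by
  have hfval : ∀ j : ℕ, 1 ≤ j → j ≤ n → 0 < fval k n j ∧ fval k n j ≤ 1 := by
    intro j _ hjn
    constructor
    · exact Real.exp_pos _
    · rw [fval, show (1 : ℝ) = Real.exp 0 by simp]
      apply Real.exp_le_exp.mpr
      have : (j : ℝ) ≤ (n : ℝ) := by exact_mod_cast hjn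
      nlinarith
  have hsum : fsup k t r ≤ ((occSet t r).card : ℝ) := by
    rw [fsup]
    calc ∑ j ∈ occSet t r, fval k n j ≤ ∑ _j ∈ occSet t r, (1 : ℝ) := by
          apply Finset.sum_le_sum
          intro j hj
          simp only [occSet, Finset.mem_filter, Finset.mem_Icc] at hj
          exact (hfval j hj.1.1 hj.1.2).2
      _ = ((occSet t r).card : ℝ) := by simp
  have hcard : (occSet t r).card ≤ (occSet t (fun i : Fin m => r i.castSucc)).card := by
    rcases Nat.eq_zero_or_pos m with hm | hm
    · subst hm
      have : occSet t (fun i : Fin 0 => r i.castSucc) = Finset.Icc 1 n := by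
        rw [occSet, Finset.filter_eq_self]
        intro j hj
        simp only [Finset.mem_Icc] at hj
        exact ⟨Nat.zero_le _, hj.2, funext fun i => i.elim0⟩
      rw [this]
      exact Finset.card_le_card (Finset.filter_subset _ _)
    · apply Finset.card_le_card_of_injOn (fun j => j - 1)
      · intro j hj
        simp only [Finset.mem_coe, occSet, Finset.mem_filter, Finset.mem_Icc] at hj ⊢
        obtain ⟨⟨hj1, hjn⟩, hmj, hjn', hrel⟩ := hj
        have hmj' : m + 1 ≤ j := hmj
        refine ⟨⟨by omega, by omega⟩, by omega, by omega, ?_⟩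
        have key := relOrder_eq_iff_comp _ _ hrel (Fin.castSucc : Fin m → Fin (m + 1))
        have h1 : (fun i : Fin m => t ⟨j - 1 - m + i.val, by have := i.isLt; omega⟩) =
            ((fun i : Fin (m + 1) => t ⟨j - (m + 1) + i.val, by have := i.isLt; omega⟩) ∘
              Fin.castSucc) := by
          funext i
          simp only [Function.comp]
          congr 1
          apply Fin.ext
          simp [Fin.castSucc]
          omega
        rw [h1, key]
        rfl
      · intro a ha b hb hab
        simp only [Finset.mem_coe, occSet, Finset.mem_filter, Finset.mem_Icc] at ha hb
        have h1a : 1 ≤ a := ha.1.1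
        have h1b : 1 ≤ b := hb.1.1
        have : a - 1 = b - 1 := hab
        omega
  refine ⟨hfval, hsum, hcard, fun minsup hlt => ?_⟩
  calc fsup k t r ≤ ((occSet t r).card : ℝ) := hsum
    _ ≤ ((occSet t (fun i : Fin m => r i.castSucc)).card : ℝ) := by exact_mod_cast hcard
    _ < minsup := hlt
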